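/- Let n ≥ 1, let Q : ℝⁿ → ℝ be differentiable, let a ∈ ℝⁿ, let λ ∈ ℝ, and define J(x) = λ·Q(x) − ‖x − a‖². Suppose x* ∈ ℝⁿ is the unique maximizer of Q, i.e., Q(x) < Q(x*) for all x ≠ x*, the gradient of Q at x* is 0, and x* ≠ a. Then every critical point x̂ of J (i.e., every point where the gradient of J vanishes) satisfies x̂ ≠ x* and Q(x̂) < Q(x*). -/

import Mathlib

/-- Sub-optimality of MSE behavior-cloning regularization: if `x*` is the unique maximizer of
the differentiable function `Q`, with vanishing gradient at `x*`, and the dataset action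
`a ≠ x*`, then every critical point `x̂` of `J x = λ·Q x − ‖x − a‖²` satisfies `x̂ ≠ x*` and
`Q x̂ < Q x*`. -/
theorem stmt_1 (n : ℕ) (hn : 1 ≤ n)
    (Q : EuclideanSpace ℝ (Fin n) → ℝ) (hQ : Differentiable ℝ Q)
    (a : EuclideanSpace ℝ (Fin n)) (lam : ℝ)
    (J : EuclideanSpace ℝ (Fin n) → ℝ)
    (hJ : ∀ x, J x = lam * Q x - ‖x - a‖ ^ 2)
    (xstar : EuclideanSpace ℝ (Fin n))
    (hmax : ∀ x, x ≠ xstar → Q x < Q xstar)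
    (hcrit : gradient Q xstar = 0) (hne : xstar ≠ a) :
    ∀ xhat : EuclideanSpace ℝ (Fin n), gradient J xhat = 0 →
      xhat ≠ xstar ∧ Q xhat < Q xstar := by
  intro xhat hgrad
  -- It suffices to show xhat ≠ xstar
  suffices hns : xhat ≠ xstar from ⟨hns, hmax xhat hns⟩
  intro heq
  subst heq
  -- fderiv of Q vanishes at xhat
  have hD : fderiv ℝ Q xhat = 0 := by
    have : (InnerProductSpace.toDual ℝ _).symm (fderiv ℝ Q xhat) = 0 := hcrit
    simpa using (LinearIsometryEquiv.map_eq_zero_iff _).mp this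
  have hJfun : J = fun x => lam * Q x - ‖x - a‖ ^ 2 := funext hJ
  -- derivative of the squared norm term
  have hsub : HasFDerivAt (fun x : EuclideanSpace ℝ (Fin n) => x - a)
      (ContinuousLinearMap.id ℝ _) xhat := (hasFDerivAt_id xhat).sub_const a
  have h2 : HasFDerivAt (fun x : EuclideanSpace ℝ (Fin n) =>
      (inner ℝ (x - a) (x - a) : ℝ))
      ((fderivInnerCLM ℝ (xhat - a, xhat - a)).comp
        ((ContinuousLinearMap.id ℝ _).prod (ContinuousLinearMap.id ℝ _))) xhat :=
    hsub.inner ℝ hsub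
  have h2' : HasFDerivAt (fun x : EuclideanSpace ℝ (Fin n) => ‖x - a‖ ^ 2)
      ((fderivInnerCLM ℝ (xhat - a, xhat - a)).comp
        ((ContinuousLinearMap.id ℝ _).prod (ContinuousLinearMap.id ℝ _))) xhat := by
    refine h2.congr_of_eventuallyEq (Filter.Eventually.of_forall fun x => ?_)
    exact (real_inner_self_eq_norm_sq _).symm
  have h1 : HasFDerivAt (fun x => lam * Q x) (lam • fderiv ℝ Q xhat) xhat :=
    (hQ xhat).hasFDerivAt.const_mul lam
  have hJd : HasFDerivAt J (lam • fderiv ℝ Q xhat -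
      ((fderivInnerCLM ℝ (xhat - a, xhat - a)).comp
        ((ContinuousLinearMap.id ℝ _).prod (ContinuousLinearMap.id ℝ _)))) xhat := by
    rw [hJfun]; exact h1.sub h2'
  -- gradient of J at xhat
  have hfd : fderiv ℝ J xhat = lam • fderiv ℝ Q xhat -
      ((fderivInnerCLM ℝ (xhat - a, xhat - a)).comp
        ((ContinuousLinearMap.id ℝ _).prod (ContinuousLinearMap.id ℝ _))) := hJd.fderiv
  have hfd0 : fderiv ℝ J xhat = 0 := by
    have : (InnerProductSpace.toDual ℝ _).symm (fderiv ℝ J xhat) = 0 := hgrad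
    simpa using (LinearIsometryEquiv.map_eq_zero_iff _).mp this
  have := hfd0 ▸ hfd
  -- evaluate at (xhat - a)
  have heval := congrArg (fun L : EuclideanSpace ℝ (Fin n) →L[ℝ] ℝ => L (xhat - a)) this.symm
  simp only [hD, smul_zero, zero_sub, ContinuousLinearMap.neg_apply,
    ContinuousLinearMap.comp_apply, ContinuousLinearMap.prod_apply,
    ContinuousLinearMap.id_apply, ContinuousLinearMap.zero_apply,
    fderivInnerCLM_apply, neg_eq_zero] at heval
  rw [real_inner_self_eq_norm_sq] at heval
  have hx : xhat - a ≠ 0 := sub_ne_zero.mpr hne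
  have h0 : 0 < ‖xhat - a‖ ^ 2 := by
    have := norm_pos_iff.mpr hx
    positivity
  linarith
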